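/- Let S be lognormal with log S ~ N(a, b²), b > 0, K > 0, and F(h) = −max(0, S−K) + h·S with h = h*(K) the variance minimizer. Then the minimized standard deviation √Var(F(h*(K))) tends to 0 as K → 0⁺. -/

import Mathlib

open MeasureTheory ProbabilityTheory Real Set Filter
open scoped NNReal ENNReal

lemma gauss_pdf_mul (c : ℝ) (x : ℝ) :
    gaussianPDFReal 0 1 x * Real.exp (c * x)
      = Real.exp (c ^ 2 / 2) * gaussianPDFReal c 1 x := by
  simp only [gaussianPDFReal, NNReal.coe_one, mul_one, sub_zero]
  rw [mul_comm, mul_left_comm, mul_left_comm (Real.exp (c ^ 2 / 2)), ← Real.exp_add,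
    ← Real.exp_add]
  congr 2
  ring

lemma gauss_pdf_eq : (gaussianPDF 0 1)
    = fun x => ((Real.toNNReal (gaussianPDFReal 0 1 x) : ℝ≥0) : ℝ≥0∞) := rfl

lemma gauss_exp_integrable (c : ℝ) :
    Integrable (fun z => Real.exp (c * z)) (gaussianReal 0 1) := by
  rw [gaussianReal_of_var_ne_zero _ one_ne_zero, gauss_pdf_eq,
    integrable_withDensity_iff_integrable_smul ((measurable_gaussianPDFReal 0 1).real_toNNReal)]
  apply Integrable.congr ((integrable_gaussianPDFReal c 1).const_mul (Real.exp (c ^ 2 / 2)))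
  filter_upwards with x
  rw [NNReal.smul_def, Real.coe_toNNReal _ (gaussianPDFReal_nonneg 0 1 x), smul_eq_mul,
    gauss_pdf_mul]

lemma gauss_exp_integral (c : ℝ) :
    ∫ z, Real.exp (c * z) ∂(gaussianReal 0 1) = Real.exp (c ^ 2 / 2) := by
  rw [gaussianReal_of_var_ne_zero _ one_ne_zero, gauss_pdf_eq,
    integral_withDensity_eq_integral_smul ((measurable_gaussianPDFReal 0 1).real_toNNReal)]
  have h : ∀ x, (Real.toNNReal (gaussianPDFReal 0 1 x)) • Real.exp (c * x)
      = Real.exp (c ^ 2 / 2) * gaussianPDFReal c 1 x := by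
    intro x
    rw [NNReal.smul_def, Real.coe_toNNReal _ (gaussianPDFReal_nonneg 0 1 x), smul_eq_mul,
      gauss_pdf_mul]
  simp only [h]
  rw [integral_const_mul, integral_gaussianPDFReal_eq_one c one_ne_zero, mul_one]

noncomputable def Φ (x : ℝ) : ℝ := ∫ t in Set.Iic x, Real.exp (-t^2/2) / Real.sqrt (2*Real.pi)

theorem stmt15 (a b : ℝ) (hb : 0 < b)
    (S : ℝ → ℝ) (hS : S = fun z => Real.exp (a + b*z))
    (A1 A2 A3 A4 A5 : ℝ → ℝ)
    (hA1 : A1 = fun K => ((gaussianReal 0 1) {z | K < S z}).toReal)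
    (hA2 : A2 = fun K => ∫ z in {z | K < S z}, S z ∂(gaussianReal 0 1))
    (hA3 : A3 = fun K => ∫ z in {z | S z ≤ K}, S z ∂(gaussianReal 0 1))
    (hA4 : A4 = fun K => ∫ z in {z | K < S z}, (S z)^2 ∂(gaussianReal 0 1))
    (hA5 : A5 = fun K => ∫ z in {z | S z ≤ K}, (S z)^2 ∂(gaussianReal 0 1))
    (hstar : ℝ → ℝ)
    (hhstar : hstar = fun K => (A4 K - K*A2 K + (A2 K + A3 K)*(K*A1 K - A2 K)) /
      (A4 K + A5 K - (A2 K + A3 K)^2))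
    (Var : ℝ → ℝ)
    (hVar : Var = fun K => (∫ z, (-max 0 (S z - K) + hstar K * S z)^2 ∂(gaussianReal 0 1)) -
      (∫ z, (-max 0 (S z - K) + hstar K * S z) ∂(gaussianReal 0 1))^2) :
    Tendsto (fun K => Real.sqrt (Var K)) (nhdsWithin 0 (Set.Ioi 0)) (nhds 0) := by
  set μ := gaussianReal 0 1 with hμ
  have contS : Continuous S := by rw [hS]; continuity
  have Spos : ∀ z, 0 < S z := by intro z; rw [hS]; exact Real.exp_pos _
  have intS : Integrable S μ := by
    rw [hS]
    apply ((gauss_exp_integrable b).const_mul (Real.exp a)).congr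
    filter_upwards with z
    rw [← Real.exp_add]
  have intS2 : Integrable (fun z => S z ^ 2) μ := by
    rw [hS]
    apply ((gauss_exp_integrable (2*b)).const_mul (Real.exp (2*a))).congr
    filter_upwards with z
    rw [← Real.exp_add, sq, ← Real.exp_add]
    congr 1; ring
  have hmS : ∫ z, S z ∂μ = Real.exp (a + b^2/2) := by
    rw [hS]
    calc ∫ z, Real.exp (a + b*z) ∂μ = ∫ z, Real.exp a * Real.exp (b*z) ∂μ := by
          congr 1; funext z; rw [← Real.exp_add]
      _ = Real.exp a * Real.exp (b^2/2) := by rw [integral_const_mul, gauss_exp_integral b]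
      _ = Real.exp (a + b^2/2) := by rw [← Real.exp_add]
  have hmS2 : ∫ z, S z ^ 2 ∂μ = Real.exp (2*a + 2*b^2) := by
    rw [hS]
    calc ∫ z, (Real.exp (a + b*z))^2 ∂μ
        = ∫ z, Real.exp (2*a) * Real.exp ((2*b)*z) ∂μ := by
          congr 1; funext z; rw [← Real.exp_add, sq, ← Real.exp_add]; congr 1; ring
      _ = Real.exp (2*a) * Real.exp ((2*b)^2/2) := by
          rw [integral_const_mul, gauss_exp_integral (2*b)]
      _ = Real.exp (2*a + 2*b^2) := by rw [← Real.exp_add]; congr 1; ring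
  set mS := ∫ z, S z ∂μ with hmSdef
  set mS2 := ∫ z, S z ^ 2 ∂μ with hmS2def
  set α := mS2 - mS^2 with hα
  have hexp2 : ∀ x : ℝ, Real.exp x ^ 2 = Real.exp (2*x) := by
    intro x; rw [sq, ← Real.exp_add, two_mul]
  have hαpos : 0 < α := by
    rw [hα, hmS, hmS2, hexp2]
    apply sub_pos.2
    apply Real.exp_lt_exp.2
    nlinarith [sq_nonneg b, hb]
  have key : ∀ K : ℝ, K ∈ Ioi (0:ℝ) → 0 ≤ Var K ∧ Var K ≤ K^2 := by
    intro K hK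
    rw [mem_Ioi] at hK
    set P : ℝ → ℝ := fun z => max 0 (S z - K) with hP
    have contP : Continuous P := continuous_const.max (contS.sub continuous_const)
    have hP0 : ∀ z, 0 ≤ P z := fun z => le_max_left _ _
    have hPleS : ∀ z, P z ≤ S z := by
      intro z
      apply max_le (Spos z).le
      linarith [hK]
    have hSPnn : ∀ z, 0 ≤ S z - P z := fun z => sub_nonneg.2 (hPleS z)
    have hSPK : ∀ z, S z - P z ≤ K := by
      intro z
      have := le_max_right 0 (S z - K)
      simp only [hP]; linarith
    have intP : Integrable P μ := by
      apply intS.mono contP.aestronglyMeasurable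
      filter_upwards with z
      rw [Real.norm_eq_abs, Real.norm_eq_abs, abs_of_nonneg (hP0 z), abs_of_nonneg (Spos z).le]
      exact hPleS z
    have intP2 : Integrable (fun z => P z ^ 2) μ := by
      apply intS2.mono (contP.pow 2).aestronglyMeasurable
      filter_upwards with z
      rw [Real.norm_eq_abs, Real.norm_eq_abs, Pi.pow_apply, abs_of_nonneg (sq_nonneg (P z)),
        abs_of_nonneg (sq_nonneg (S z))]
      exact pow_le_pow_left₀ (hP0 z) (hPleS z) 2
    have intPS : Integrable (fun z => P z * S z) μ := by
      apply intS2.mono (contP.mul contS).aestronglyMeasurable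
      filter_upwards with z
      rw [Real.norm_eq_abs, Real.norm_eq_abs, Pi.mul_apply, abs_of_nonneg (mul_nonneg (hP0 z) (Spos z).le),
        abs_of_nonneg (sq_nonneg (S z)), sq]
      exact mul_le_mul_of_nonneg_right (hPleS z) (Spos z).le
    set s : Set ℝ := {z | K < S z} with hs
    have hsm : MeasurableSet s := measurableSet_lt measurable_const contS.measurable
    have hscompl : {z | S z ≤ K} = sᶜ := by ext z; simp [hs, not_lt]
    set mP := ∫ z, P z ∂μ with hmP
    set mP2 := ∫ z, P z ^ 2 ∂μ with hmP2
    set mPS := ∫ z, P z * S z ∂μ with hmPS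
    set β := mPS - mS * mP with hβ
    have e1 : A2 K + A3 K = mS := by
      rw [hA2, hA3]; simp only [hscompl]
      exact integral_add_compl hsm intS
    have e2 : A4 K + A5 K = mS2 := by
      rw [hA4, hA5]; simp only [hscompl]
      exact integral_add_compl hsm intS2
    have e3 : mP = A2 K - K * A1 K := by
      rw [hA2, hA1, hmP]
      simp only
      rw [← setIntegral_eq_integral_of_forall_compl_eq_zero (s := s) (f := P) ?_]
      · have heq : ∀ z ∈ s, P z = S z - K := by
          intro z hz
          simp only [hs, mem_setOf_eq] at hz
          simp only [hP]
          exact max_eq_right (by linarith)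
        rw [setIntegral_congr_fun hsm heq, integral_sub intS.integrableOn
          (integrableOn_const (measure_lt_top μ s).ne), setIntegral_const,
          smul_eq_mul, mul_comm, measureReal_def]
      · intro z hz
        simp only [hs, mem_setOf_eq, not_lt] at hz
        simp only [hP]
        exact max_eq_left (by linarith)
    have e4 : mPS = A4 K - K * A2 K := by
      rw [hA4, hA2, hmPS]
      simp only
      rw [← setIntegral_eq_integral_of_forall_compl_eq_zero (s := s)
        (f := fun z => P z * S z) ?_]
      · have heq : ∀ z ∈ s, P z * S z = S z ^ 2 - K * S z := by
          intro z hz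
          simp only [hs, mem_setOf_eq] at hz
          simp only [hP]
          rw [max_eq_right (by linarith)]
          ring
        rw [setIntegral_congr_fun hsm heq, integral_sub intS2.integrableOn
          (intS.integrableOn.const_mul K), integral_const_mul]
      · intro z hz
        simp only [hs, mem_setOf_eq, not_lt] at hz
        simp only [hP]
        rw [max_eq_left (by linarith), zero_mul]
    have hh : hstar K = β / α := by
      rw [hhstar]
      simp only
      rw [hα, hβ, e3, e4, ← e1, ← e2]
      ring_nf
    have expand_sq : ∀ h1 : ℝ, (fun z => (-P z + h1 * S z)^2)
        = fun z => (P z ^ 2 - (2*h1) * (P z * S z)) + h1^2 * S z^2 := by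
      intro h1; funext z; ring
    have int_sq : ∀ h1 : ℝ, ∫ z, (-P z + h1 * S z)^2 ∂μ
        = mP2 - 2*h1*mPS + h1^2 * mS2 := by
      intro h1
      have i1 : Integrable (fun z => P z ^ 2 - (2*h1) * (P z * S z)) μ :=
        intP2.sub (intPS.const_mul (2*h1))
      have i2 : Integrable (fun z => h1^2 * S z^2) μ := intS2.const_mul _
      rw [expand_sq h1, integral_add i1 i2, integral_sub intP2 (intPS.const_mul (2*h1)),
        integral_const_mul, integral_const_mul]
    have int_one : ∀ h1 : ℝ, ∫ z, (-P z + h1 * S z) ∂μ = -mP + h1 * mS := by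
      intro h1
      have i3 : Integrable (fun z => -P z) μ := intP.neg
      rw [integral_add i3 (intS.const_mul h1), integral_neg, integral_const_mul]
    have hVarK : Var K = mP2 - 2*(hstar K)*mPS + (hstar K)^2*mS2 - (-mP + (hstar K)*mS)^2 := by
      rw [hVar]
      show (∫ z, (-P z + hstar K * S z)^2 ∂μ) - (∫ z, (-P z + hstar K * S z) ∂μ)^2 = _
      rw [int_sq (hstar K), int_one (hstar K)]
    constructor
    · have contX : Continuous (fun z => -P z + hstar K * S z) :=
        contP.neg.add (continuous_const.mul contS)
      have intX2 : Integrable (fun z => (-P z + hstar K * S z)^2) μ := by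
        rw [expand_sq (hstar K)]
        exact (intP2.sub (intPS.const_mul (2*hstar K))).add (intS2.const_mul ((hstar K)^2))
      have hmem : MemLp (fun z => -P z + hstar K * S z) 2 μ :=
        (memLp_two_iff_integrable_sq contX.aestronglyMeasurable).2 intX2
      have hvv : variance (fun z => -P z + hstar K * S z) μ
          = mP2 - 2*(hstar K)*mPS + (hstar K)^2*mS2 - (-mP + (hstar K)*mS)^2 := by
        rw [variance_eq_sub hmem]
        simp only [Pi.pow_apply]
        rw [int_sq (hstar K), int_one (hstar K)]
      rw [hVarK, ← hvv]
      exact variance_nonneg _ _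
    · have hVar2 : Var K = (mP2 - mP^2) - β^2/α := by
        rw [hVarK, hh]
        field_simp
        ring
      have hq1 : Var K ≤ (mP2 - mP^2) - (2*β - α) := by
        have heq : ((mP2 - mP^2) - (2*β - α)) - Var K = (α - β)^2/α := by
          rw [hVar2]; field_simp; ring
        have h2' : 0 ≤ (α - β)^2/α := div_nonneg (sq_nonneg _) hαpos.le
        linarith
      have hq2 : (mP2 - mP^2) - (2*β - α) = (∫ z, (S z - P z)^2 ∂μ) - (mS - mP)^2 := by
        have e5 : ∫ z, (S z - P z)^2 ∂μ = mP2 - 2*mPS + mS2 := by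
          have heq : (fun z => (S z - P z)^2) = fun z => (-P z + 1 * S z)^2 := by
            funext z; ring
          rw [heq, int_sq 1]; ring
        rw [e5, hβ, hα]; ring
      have hq3 : ∫ z, (S z - P z)^2 ∂μ ≤ K^2 := by
        have hmono : ∫ z, (S z - P z)^2 ∂μ ≤ ∫ _z, K^2 ∂μ := by
          apply integral_mono ?_ (integrable_const _)
          · intro z
            exact pow_le_pow_left₀ (hSPnn z) (hSPK z) 2
          · have heq : (fun z => (S z - P z)^2) = fun z => (-P z + 1 * S z)^2 := by
              funext z; ring
            rw [heq, expand_sq 1]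
            exact (intP2.sub (intPS.const_mul (2*1))).add (intS2.const_mul (1^2))
        rwa [integral_const, probReal_univ, one_smul] at hmono
      have := sq_nonneg (mS - mP)
      linarith
  apply tendsto_of_tendsto_of_tendsto_of_le_of_le' tendsto_const_nhds
    (tendsto_id.mono_left nhdsWithin_le_nhds)
  · filter_upwards with K
    exact Real.sqrt_nonneg _
  · filter_upwards [self_mem_nhdsWithin] with K hK
    obtain ⟨h1, h2⟩ := key K hK
    rw [mem_Ioi] at hK
    calc Real.sqrt (Var K) ≤ Real.sqrt (K^2) := Real.sqrt_le_sqrt h2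
      _ = K := by rw [Real.sqrt_sq hK.le]
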